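/- arXiv:1011.3860 — 2 statements merged into one kernel-verified Lean document; each statement's English description precedes it below -/
import Mathlib

section
/- For every integer i ≥ 1, the secant number A_{2i} satisfies A_{2i} = Σ_{m=1}^{i} (−1)^{i+m} Σ (2i)!/(n_1!·n_2!·⋯·n_m!), where the inner sum is over all ordered tuples (n_1,…,n_m) of even integers with each n_j ≥ 2 and n_1 + n_2 + ⋯ + n_m = 2i. (This is the dimension count underlying the expression of the cohomology H^i of the real type A Coxeter toric variety as a signed sum of induced sign representations.) -/
open PowerSeries Finset

lemma coeff_pow_tuple {R : Type*} [CommSemiring R] (m n : ℕ) (φ : PowerSeries R) :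
    PowerSeries.coeff n (φ ^ m) =
      ∑ f ∈ Finset.Nat.antidiagonalTuple m n, ∏ j, PowerSeries.coeff (f j) φ := by
  have h : φ ^ m = ∏ _j : Fin m, φ := by simp
  rw [h, PowerSeries.coeff_prod]
  refine Finset.sum_nbij' (fun l => (l : Fin m → ℕ)) (fun f => Finsupp.equivFunOnFinite.symm f)
    ?_ ?_ ?_ ?_ ?_
  · intro l hl
    simp only [Finset.mem_finsuppAntidiag] at hl
    simp [Finset.Nat.mem_antidiagonalTuple, ← hl.1]
  · intro f hf
    simp only [Finset.Nat.mem_antidiagonalTuple] at hf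
    simp only [Finset.mem_finsuppAntidiag]
    constructor
    · rw [← hf]; exact Finset.sum_congr rfl (by simp)
    · exact Finset.subset_univ _
  · intro l _; exact Finsupp.equivFunOnFinite.symm_apply_apply l
  · intro f _; rfl
  · intro l _; exact Finset.prod_congr rfl (by simp)

/-- The secant (Euler) numbers: `A i` denotes `A_{2i}`, the coefficient of
`X^{2i}/(2i)!` in `sec X`, defined by the identity `cos X · sec X = 1` in `ℚ[[X]]`.
For `i ≥ 1`,
`A_{2i} = Σ_{m=1}^{i} (−1)^{i+m} Σ (2i)!/(n_1!⋯n_m!)`,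
the inner sum being over ordered tuples `(n_1,…,n_m)` of even integers `n_j ≥ 2` with
`n_1 + ⋯ + n_m = 2i`. -/
theorem stmt10 (A : ℕ → ℚ)
    (hA : (PowerSeries.mk fun j => if Even j then ((-1 : ℚ)) ^ (j / 2) / (Nat.factorial j) else 0) *
          (PowerSeries.mk fun j => if Even j then A (j / 2) / (Nat.factorial j) else 0) = 1) :
    ∀ i : ℕ, 1 ≤ i →
      A i = ∑ m ∈ Finset.Icc 1 i, (-1 : ℚ) ^ (i + m) *
        ∑ f ∈ (Finset.Nat.antidiagonalTuple m (2 * i)).filter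
            (fun f => ∀ j, Even (f j) ∧ 2 ≤ f j),
          (Nat.factorial (2 * i) : ℚ) / ∏ j, (Nat.factorial (f j) : ℚ) := by
  intro i hi
  set C : PowerSeries ℚ :=
    PowerSeries.mk fun j => if Even j then ((-1 : ℚ)) ^ (j / 2) / (Nat.factorial j) else 0 with hC
  set S : PowerSeries ℚ :=
    PowerSeries.mk fun j => if Even j then A (j / 2) / (Nat.factorial j) else 0 with hS
  set D : PowerSeries ℚ := 1 - C with hDdef
  -- coefficients of D
  have hcoeffD : ∀ k, PowerSeries.coeff k D =
      (if k = 0 then (1 : ℚ) else 0) - (if Even k then ((-1 : ℚ)) ^ (k / 2) / (Nat.factorial k) else 0) := by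
    intro k
    rw [hDdef, map_sub, PowerSeries.coeff_one, hC, PowerSeries.coeff_mk]
  have hD0 : PowerSeries.coeff 0 D = 0 := by simp [hcoeffD]
  have hD1 : PowerSeries.coeff 1 D = 0 := by
    rw [hcoeffD]; norm_num [Nat.even_iff]
  -- vanishing of low coefficients of D ^ m
  have hDpow : ∀ m n : ℕ, n < 2 * m → PowerSeries.coeff n (D ^ m) = 0 := by
    intro m n hn
    have hX2 : (PowerSeries.X : PowerSeries ℚ) ^ 2 ∣ D := by
      rw [PowerSeries.X_pow_dvd_iff]
      intro j hj
      interval_cases j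
      · exact hD0
      · exact hD1
    have : (PowerSeries.X : PowerSeries ℚ) ^ (2 * m) ∣ D ^ m := by
      rw [pow_mul]
      exact pow_dvd_pow_of_dvd hX2 m
    exact (PowerSeries.X_pow_dvd_iff.mp this) n hn
  -- geometric expansion
  have hgeom : S = (∑ m ∈ Finset.range (i + 1), D ^ m) + D ^ (i + 1) * S := by
    have h1 : C * (∑ m ∈ Finset.range (i + 1), D ^ m) = 1 - D ^ (i + 1) := by
      have := geom_sum_mul D (i + 1)
      have hC' : C = 1 - D := by ring
      rw [hC']
      linear_combination -this
    calc S = (C * (∑ m ∈ Finset.range (i + 1), D ^ m) + D ^ (i + 1)) * S := by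
            rw [h1]; ring
      _ = (∑ m ∈ Finset.range (i + 1), D ^ m) * (C * S) + D ^ (i + 1) * S := by ring
      _ = (∑ m ∈ Finset.range (i + 1), D ^ m) + D ^ (i + 1) * S := by rw [hA]; ring
  -- extract coefficient 2i
  have hcoeffS : PowerSeries.coeff (2 * i) S = A i / (Nat.factorial (2 * i)) := by
    rw [hS, PowerSeries.coeff_mk, if_pos ⟨i, by ring⟩]
    congr 2
    omega
  have htail : PowerSeries.coeff (2 * i) (D ^ (i + 1) * S) = 0 := by
    rw [PowerSeries.coeff_mul]
    apply Finset.sum_eq_zero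
    intro p hp
    rw [Finset.HasAntidiagonal.mem_antidiagonal] at hp
    have h1 : p.1 < 2 * (i + 1) := by omega
    rw [hDpow (i + 1) p.1 h1, zero_mul]
  have hmain : A i / (Nat.factorial (2 * i)) =
      ∑ m ∈ Finset.range (i + 1), PowerSeries.coeff (2 * i) (D ^ m) := by
    rw [← hcoeffS]
    conv_lhs => rw [hgeom]
    rw [map_add, htail, add_zero, map_sum]
  -- m = 0 term vanishes
  have hzero : PowerSeries.coeff (2 * i) (D ^ 0) = 0 := by
    rw [pow_zero, PowerSeries.coeff_one, if_neg (by omega)]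
  have hrange : ∑ m ∈ Finset.range (i + 1), PowerSeries.coeff (2 * i) (D ^ m) =
      ∑ m ∈ Finset.Icc 1 i, PowerSeries.coeff (2 * i) (D ^ m) := by
    have h : Finset.range (i + 1) = insert 0 (Finset.Icc 1 i) := by
      ext x; simp; omega
    rw [h, Finset.sum_insert (by simp), hzero, zero_add]
  -- per-m coefficient computation
  have hterm : ∀ m ∈ Finset.Icc 1 i, PowerSeries.coeff (2 * i) (D ^ m) =
      (-1 : ℚ) ^ (i + m) *
        ∑ f ∈ (Finset.Nat.antidiagonalTuple m (2 * i)).filter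
            (fun f => ∀ j, Even (f j) ∧ 2 ≤ f j),
          (∏ j, (Nat.factorial (f j) : ℚ))⁻¹ := by
    intro m hm
    rw [coeff_pow_tuple]
    rw [← Finset.sum_filter_of_ne (p := fun f => ∀ j, Even (f j) ∧ 2 ≤ f j)
      (fun f _ hne => by
        by_contra hbad
        obtain ⟨j, hj⟩ := not_forall.mp hbad
        apply hne
        apply Finset.prod_eq_zero (Finset.mem_univ j)
        rw [hcoeffD]
        by_cases he : Even (f j)
        · have h2 : f j < 2 := by
            by_contra h
            exact hj ⟨he, by omega⟩
          have h0 : f j = 0 := by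
            rcases he with ⟨t, ht⟩
            omega
          norm_num [h0]
        · have : f j ≠ 0 := fun h0 => he (h0 ▸ Even.zero)
          simp [he, this])]
    rw [Finset.mul_sum]
    apply Finset.sum_congr rfl
    intro f hf
    rw [Finset.mem_filter, Finset.Nat.mem_antidiagonalTuple] at hf
    obtain ⟨hsum, hprop⟩ := hf
    have hne0 : ∀ j, f j ≠ 0 := fun j => by have := (hprop j).2; omega
    have hfac : ∀ j : Fin m, PowerSeries.coeff (f j) D =
        (-1 : ℚ) ^ (f j / 2 + 1) * ((Nat.factorial (f j) : ℚ))⁻¹ := by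
      intro j
      rw [hcoeffD, if_neg (hne0 j), if_pos (hprop j).1]
      rw [pow_succ]
      field_simp
      ring
    rw [Finset.prod_congr rfl (fun j _ => hfac j), Finset.prod_mul_distrib,
      Finset.prod_pow_eq_pow_sum, ← Finset.prod_inv_distrib]
    have hsum2 : ∑ j, (f j / 2 + 1) = i + m := by
      have h2 : ∑ j, (f j / 2 + 1) = (∑ j, f j / 2) + m := by
        rw [Finset.sum_add_distrib]; simp
      have h3 : 2 * (∑ j : Fin m, f j / 2) = ∑ j : Fin m, f j := by
        rw [Finset.mul_sum]
        apply Finset.sum_congr rfl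
        intro j _
        exact Nat.two_mul_div_two_of_even (hprop j).1
      omega
    rw [hsum2]
  -- put it together
  have hA2 : A i = (Nat.factorial (2 * i) : ℚ) *
      ∑ m ∈ Finset.Icc 1 i, PowerSeries.coeff (2 * i) (D ^ m) := by
    rw [← hrange, ← hmain]
    field_simp
  rw [hA2, Finset.mul_sum]
  apply Finset.sum_congr rfl
  intro m hm
  rw [hterm m hm, mul_left_comm]
  congr 1
  rw [Finset.mul_sum]
  exact Finset.sum_congr rfl (fun f _ => by rw [div_eq_mul_inv])
end

section
/- In the formal power series ring ℚ[[X,T]] in two commuting variables X and T, the following identity holds: (Σ_{n≥0} Σ_{0≤i≤n/2} (−1)^i A_{2i} · binom(n,2i) · T^i · X^n/n!) · (Σ_{k≥0} T^k X^{2k}/(2k)!) = Σ_{n≥0} X^n/n!. (Equivalently, the two-variable exponential generating function Σ_{n,i} A_{2i} binom(n,2i) (−T)^i X^n/n! equals exp(X)·sech(T^{1/2} X); this encodes the Betti numbers dim H^i(T_n(ℝ),ℚ) = A_{2i} binom(n,2i) of the real toric variety of the type A Coxeter fan.) -/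
theorem keylem (A : ℕ → ℚ)
    (hA : (PowerSeries.mk fun j => if Even j then ((-1 : ℚ)) ^ (j / 2) / (Nat.factorial j) else 0) *
          (PowerSeries.mk fun j => if Even j then A (j / 2) / (Nat.factorial j) else 0) = 1) :
    ∀ m : ℕ, ∑ p ∈ Finset.HasAntidiagonal.antidiagonal m,
      ((-1:ℚ)^p.1 / (2*p.1).factorial) * (A p.2 / (2*p.2).factorial)
      = if m = 0 then 1 else 0 := by
  intro m
  set F : ℕ × ℕ → ℚ := fun q =>
    (if Even q.1 then ((-1 : ℚ)) ^ (q.1 / 2) / (Nat.factorial q.1) else 0) *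
    (if Even q.2 then A (q.2 / 2) / (Nat.factorial q.2) else 0) with hF
  have h : ∑ q ∈ Finset.HasAntidiagonal.antidiagonal (2*m), F q = if 2*m = 0 then 1 else 0 := by
    have h := congrArg (PowerSeries.coeff (2*m)) hA
    rw [PowerSeries.coeff_mul] at h
    simpa [hF] using h
  have hinj : ∀ x ∈ Finset.HasAntidiagonal.antidiagonal m, ∀ y ∈ Finset.HasAntidiagonal.antidiagonal m,
      (fun p : ℕ × ℕ => (2*p.1, 2*p.2)) x = (fun p : ℕ × ℕ => (2*p.1, 2*p.2)) y → x = y := by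
    intro a _ b _ hab; simp only [Prod.ext_iff] at hab ⊢; omega
  have step1 : ∑ q ∈ Finset.HasAntidiagonal.antidiagonal (2*m), F q
      = ∑ q ∈ (Finset.HasAntidiagonal.antidiagonal m).image (fun p : ℕ × ℕ => (2*p.1, 2*p.2)), F q := by
    refine (Finset.sum_subset ?_ ?_).symm
    · intro q hq
      simp only [Finset.mem_image, Finset.HasAntidiagonal.mem_antidiagonal, Prod.ext_iff] at hq ⊢
      obtain ⟨p, hp, h1, h2⟩ := hq
      omega
    · intro q hq hq'
      simp only [Finset.mem_image, Finset.HasAntidiagonal.mem_antidiagonal, Prod.ext_iff] at hq hq'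
      rcases Nat.even_or_odd q.1 with he | ho
      · exfalso
        obtain ⟨a, ha⟩ := he
        have he2 : Even q.2 := by
          rcases Nat.even_or_odd q.2 with h | h
          · exact h
          · exfalso; obtain ⟨b, hb⟩ := h; omega
        obtain ⟨b, hb⟩ := he2
        exact hq' ⟨(a, b), by omega, by omega, by omega⟩
      · simp [hF, Nat.not_even_iff_odd.mpr ho]
  have step2 := Finset.sum_image (f := F) hinj
  rw [step1, step2] at h
  rw [show (if m = 0 then (1:ℚ) else 0) = (if 2*m = 0 then 1 else 0) from by
    rcases m with _|m <;> simp, ← h]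
  apply Finset.sum_congr rfl
  intro p _
  have e1 : Even (2*p.1) := even_two_mul _
  have e2 : Even (2*p.2) := even_two_mul _
  simp [hF, e1, e2, Nat.mul_div_cancel_left _ two_pos]

theorem keylem2 (A : ℕ → ℚ)
    (hA : (PowerSeries.mk fun j => if Even j then ((-1 : ℚ)) ^ (j / 2) / (Nat.factorial j) else 0) *
          (PowerSeries.mk fun j => if Even j then A (j / 2) / (Nat.factorial j) else 0) = 1) :
    ∀ m : ℕ, ∑ p ∈ Finset.HasAntidiagonal.antidiagonal m,
      ((-1:ℚ)^p.1 * A p.1 / ((2*p.1).factorial * (2*p.2).factorial))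
      = if m = 0 then 1 else 0 := by
  intro m
  have h := keylem A hA m
  have swap : ∑ p ∈ Finset.HasAntidiagonal.antidiagonal m,
      ((-1:ℚ)^p.1 * A p.1 / ((2*p.1).factorial * (2*p.2).factorial))
      = ∑ p ∈ Finset.HasAntidiagonal.antidiagonal m,
      ((-1:ℚ)^p.2 * A p.2 / ((2*p.2).factorial * (2*p.1).factorial)) :=
    (Finset.Nat.sum_antidiagonal_swap
      (f := fun p : ℕ × ℕ => (-1:ℚ)^p.1 * A p.1 / ((2*p.1).factorial * (2*p.2).factorial))).symm
  rw [swap]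
  have hx : ∑ p ∈ Finset.HasAntidiagonal.antidiagonal m,
      ((-1:ℚ)^p.2 * A p.2 / ((2*p.2).factorial * (2*p.1).factorial))
      = (-1:ℚ)^m * ∑ p ∈ Finset.HasAntidiagonal.antidiagonal m,
      ((-1:ℚ)^p.1 / (2*p.1).factorial * (A p.2 / (2*p.2).factorial)) := by
    rw [Finset.mul_sum]
    apply Finset.sum_congr rfl
    intro p hp
    rw [Finset.HasAntidiagonal.mem_antidiagonal] at hp
    have hs : ((-1:ℚ))^m * (-1)^p.1 = (-1)^p.2 := by
      rw [← hp, pow_add, mul_comm ((-1:ℚ)^p.1) _, mul_assoc, ← pow_add, ← two_mul, pow_mul]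
      simp
    rw [← hs]
    ring
  rw [hx, h]
  by_cases hm : m = 0 <;> simp [hm]


/-- In `ℚ[[X,T]]` (realized as `ℚ[[X]][[T]]`, the outer variable being `T`), with
`A i = A_{2i}` the secant numbers defined by `cos · sec = 1`, one has
`(Σ_{n,i} (−1)^i A_{2i} binom(n,2i) T^i X^n/n!) · (Σ_k T^k X^{2k}/(2k)!) = Σ_n X^n/n!`;
this encodes the Betti numbers `dim H^i(T_n(ℝ),ℚ) = A_{2i} binom(n,2i)` of the real
toric variety of the type A Coxeter fan. -/
theorem stmt11 (A : ℕ → ℚ)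
    (hA : (PowerSeries.mk fun j => if Even j then ((-1 : ℚ)) ^ (j / 2) / (Nat.factorial j) else 0) *
          (PowerSeries.mk fun j => if Even j then A (j / 2) / (Nat.factorial j) else 0) = 1) :
    (PowerSeries.mk fun i => PowerSeries.mk fun n =>
        (-1 : ℚ) ^ i * A i * (n.choose (2 * i) : ℚ) / (Nat.factorial n)) *
      (PowerSeries.mk fun k => PowerSeries.mk fun n =>
        if n = 2 * k then (1 : ℚ) / (Nat.factorial n) else 0) =
      (PowerSeries.mk fun k =>
        if k = 0 then PowerSeries.mk (fun n => (1 : ℚ) / (Nat.factorial n)) else 0) := by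
  have key := keylem2 A hA
  apply PowerSeries.ext; intro m
  rw [PowerSeries.coeff_mul]
  simp only [PowerSeries.coeff_mk]
  apply PowerSeries.ext; intro n
  rw [map_sum]
  have inner : ∀ p ∈ Finset.HasAntidiagonal.antidiagonal m,
      (PowerSeries.coeff n) ((PowerSeries.mk fun n =>
        (-1 : ℚ) ^ p.1 * A p.1 * (n.choose (2 * p.1) : ℚ) / (Nat.factorial n)) *
        (PowerSeries.mk fun n => if n = 2 * p.2 then (1 : ℚ) / (Nat.factorial n) else 0))
      = if 2 * p.2 ≤ n then
          (-1 : ℚ) ^ p.1 * A p.1 * ((n - 2*p.2).choose (2 * p.1) : ℚ) / (Nat.factorial (n - 2*p.2))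
            * (1 / (Nat.factorial (2 * p.2)))
        else 0 := by
    intro p _
    rw [PowerSeries.coeff_mul]
    simp only [PowerSeries.coeff_mk]
    by_cases hk : 2 * p.2 ≤ n
    · rw [if_pos hk]
      rw [Finset.sum_eq_single (n - 2*p.2, 2*p.2)]
      · simp
      · intro q hq hne
        rw [Finset.HasAntidiagonal.mem_antidiagonal] at hq
        have : q.2 ≠ 2 * p.2 := by
          intro h; apply hne
          have : q.1 = n - 2*p.2 := by omega
          exact Prod.ext this h
        simp [this]
      · intro h
        exfalso; apply h
        rw [Finset.HasAntidiagonal.mem_antidiagonal]; omega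
    · rw [if_neg hk]
      apply Finset.sum_eq_zero
      intro q hq
      rw [Finset.HasAntidiagonal.mem_antidiagonal] at hq
      have : q.2 ≠ 2 * p.2 := by omega
      simp [this]
  rw [Finset.sum_congr rfl inner]
  by_cases hn : 2 * m ≤ n
  · have hstep : ∀ p ∈ Finset.HasAntidiagonal.antidiagonal m,
        (if 2 * p.2 ≤ n then
          (-1 : ℚ) ^ p.1 * A p.1 * ((n - 2*p.2).choose (2 * p.1) : ℚ) / (Nat.factorial (n - 2*p.2))
            * (1 / (Nat.factorial (2 * p.2)))
        else 0)
        = ((-1:ℚ)^p.1 * A p.1 / ((2*p.1).factorial * (2*p.2).factorial))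
            * (1 / (Nat.factorial (n - 2*m))) := by
      intro p hp
      rw [Finset.HasAntidiagonal.mem_antidiagonal] at hp
      have hk : 2 * p.2 ≤ n := by omega
      have hi : 2 * p.1 ≤ n - 2 * p.2 := by omega
      rw [if_pos hk, Nat.cast_choose ℚ hi]
      have hsub : n - 2*p.2 - 2*p.1 = n - 2*m := by omega
      rw [hsub]
      have f1 : ((Nat.factorial (2*p.1) : ℚ)) ≠ 0 := Nat.cast_ne_zero.mpr (Nat.factorial_ne_zero _)
      have f2 : ((Nat.factorial (2*p.2) : ℚ)) ≠ 0 := Nat.cast_ne_zero.mpr (Nat.factorial_ne_zero _)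
      have f3 : ((Nat.factorial (n - 2*m) : ℚ)) ≠ 0 := Nat.cast_ne_zero.mpr (Nat.factorial_ne_zero _)
      have f4 : ((Nat.factorial (n - 2*p.2) : ℚ)) ≠ 0 := Nat.cast_ne_zero.mpr (Nat.factorial_ne_zero _)
      field_simp
    rw [Finset.sum_congr rfl hstep, ← Finset.sum_mul, key m]
    by_cases hm : m = 0 <;> simp [hm, PowerSeries.coeff_mk]
  · have hm : m ≠ 0 := by omega
    rw [Finset.sum_eq_zero]
    · simp [hm]
    · intro p hp
      rw [Finset.HasAntidiagonal.mem_antidiagonal] at hp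
      by_cases hk : 2 * p.2 ≤ n
      · rw [if_pos hk]
        have : (n - 2*p.2).choose (2*p.1) = 0 := Nat.choose_eq_zero_of_lt (by omega)
        simp [this]
      · rw [if_neg hk]
end
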